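/- (Lemma 3) Let (A_n) be a sequence of real-valued random variables such that for every x ∈ ℝ, P(A_n ≤ sqrt(4·log n − log log n + x)) → F(x) as n → ∞, where F is a continuous distribution function on ℝ. Then the random variables U_n := 4·sqrt(log n)·(A_n − 2·sqrt(log n) + (log log n)/(4·sqrt(log n))) converge weakly to the probability measure with distribution function F. -/

import Mathlib

open Filter MeasureTheory ProbabilityTheory

private lemma aux_tendsto (x : ℝ) :
    Tendsto (fun n : ℕ => (x - Real.log (Real.log n)) ^ 2 / (16 * Real.log n)) atTop (nhds 0) := by
  have hlog : Tendsto (fun n : ℕ => Real.log n) atTop atTop :=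
    Real.tendsto_log_atTop.comp tendsto_natCast_atTop_atTop
  have key : Tendsto (fun t : ℝ => (x - Real.log t) ^ 2 / (16 * t)) atTop (nhds 0) := by
    have h1 := Real.tendsto_pow_log_div_mul_add_atTop 16 0 1 (by norm_num)
    have h2 := Real.tendsto_pow_log_div_mul_add_atTop 16 0 2 (by norm_num)
    have h3 : Tendsto (fun t : ℝ => x ^ 2 / (16 * t)) atTop (nhds 0) :=
      Tendsto.div_atTop tendsto_const_nhds (tendsto_id.const_mul_atTop (by norm_num))
    have hsum := (h3.sub (h1.const_mul (2 * x))).add h2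
    have h0 : ((0:ℝ) - 2 * x * 0) + 0 = 0 := by ring
    rw [h0] at hsum
    refine hsum.congr fun t => ?_
    ring
  exact key.comp hlog

theorem stmt4 {Ω : Type*} [MeasurableSpace Ω] (P : Measure Ω) [IsProbabilityMeasure P]
    (A : ℕ → Ω → ℝ) (hA : ∀ n, Measurable (A n))
    (F : ℝ → ℝ) (hFcont : Continuous F) (hFmono : Monotone F)
    (hF0 : Tendsto F atBot (nhds 0)) (hF1 : Tendsto F atTop (nhds 1))
    (h : ∀ x : ℝ,
      Tendsto
        (fun n : ℕ =>
          (P {ω | A n ω ≤ Real.sqrt (4 * Real.log n - Real.log (Real.log n) + x)}).toReal)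
        atTop (nhds (F x))) :
    ∀ x : ℝ,
      Tendsto
        (fun n : ℕ =>
          (P {ω | 4 * Real.sqrt (Real.log n) *
              (A n ω - 2 * Real.sqrt (Real.log n) +
                Real.log (Real.log n) / (4 * Real.sqrt (Real.log n))) ≤ x}).toReal)
        atTop (nhds (F x)) := by
  intro x
  rw [Metric.tendsto_nhds]
  intro ε hε
  obtain ⟨δ, hδ, hδF⟩ := Metric.continuous_iff.mp hFcont x (ε / 2) (by linarith)
  set y := x + δ / 2 with hy
  have hFy : F y < F x + ε / 2 := by
    have hd := hδF y (by rw [Real.dist_eq]; rw [hy]; rw [abs_of_nonneg (by linarith)]; linarith)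
    rw [Real.dist_eq] at hd
    have := (abs_lt.mp hd).2
    linarith
  have E1 := (Metric.tendsto_nhds.mp (h x)) ε hε
  have E2 := (Metric.tendsto_nhds.mp (h y)) (ε / 2) (by linarith)
  have E3 : ∀ᶠ n : ℕ in atTop,
      (x - Real.log (Real.log n)) ^ 2 / (16 * Real.log n) < min (δ / 2) 1 :=
    (aux_tendsto x).eventually_lt_const (lt_min (by linarith) one_pos)
  have E4 : ∀ᶠ n : ℕ in atTop, 1 ≤ Real.log n :=
    (Real.tendsto_log_atTop.comp tendsto_natCast_atTop_atTop).eventually_ge_atTop 1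
  filter_upwards [E1, E2, E3, E4] with n h1 h2 h3 h4
  set l := Real.log (n : ℝ) with hl
  set L := Real.log l with hL
  set s := Real.sqrt l with hs
  have hs1 : 1 ≤ s := by
    rw [hs]; rw [show (1:ℝ) = Real.sqrt 1 by simp]; exact Real.sqrt_le_sqrt h4
  have hs0 : (0:ℝ) < s := by linarith
  have hss : s ^ 2 = l := Real.sq_sqrt (by linarith)
  set c := 2 * s + (x - L) / (4 * s) with hc
  have h5 : (x - L) ^ 2 < 16 * l := by
    have hlt := lt_of_lt_of_le h3 (min_le_right _ _)
    rw [div_lt_one (by nlinarith)] at hlt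
    exact hlt
  have hcnn : 0 ≤ c := by
    have hd : -1 < (x - L) / (4 * s) := by
      rw [lt_div_iff₀ (by positivity)]
      nlinarith
    rw [hc]; nlinarith
  have hc2 : c ^ 2 = 4 * l - L + (x + (x - L) ^ 2 / (16 * l)) := by
    have hc2' : c ^ 2 = 4 * s ^ 2 + (x - L) + (x - L) ^ 2 / (16 * s ^ 2) := by
      rw [hc]; field_simp; ring
    rw [hc2', hss]; ring
  have hsqrt : Real.sqrt (4 * l - L + (x + (x - L) ^ 2 / (16 * l))) = c := by
    rw [← hc2, Real.sqrt_sq hcnn]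
  have hexp : ∀ a : ℝ, 4 * s * (a - 2 * s + L / (4 * s)) = 4 * s * a - 8 * s ^ 2 + L := by
    intro a; field_simp; ring
  have h4sc : 4 * s * c = 8 * s ^ 2 + (x - L) := by
    rw [hc]; field_simp; ring
  have hciff : ∀ a : ℝ, (4 * s * (a - 2 * s + L / (4 * s)) ≤ x ↔ a ≤ c) := by
    intro a
    rw [hexp a]
    constructor
    · intro H
      rw [← mul_le_mul_iff_right₀ (show (0:ℝ) < 4 * s by positivity), h4sc]
      linarith
    · intro H
      have := mul_le_mul_of_nonneg_left H (show (0:ℝ) ≤ 4 * s by positivity)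
      rw [h4sc] at this
      linarith
  have hset : {ω | 4 * s * (A n ω - 2 * s + L / (4 * s)) ≤ x}
      = {ω | A n ω ≤ Real.sqrt (4 * l - L + (x + (x - L) ^ 2 / (16 * l)))} := by
    rw [hsqrt]; ext ω; exact hciff (A n ω)
  have mono : ∀ u v : ℝ, u ≤ v →
      P {ω | A n ω ≤ Real.sqrt (4 * l - L + u)} ≤ P {ω | A n ω ≤ Real.sqrt (4 * l - L + v)} := by
    intro u v huv
    exact measure_mono fun ω hω => le_trans hω (Real.sqrt_le_sqrt (by linarith))
  have hxle : x ≤ x + (x - L) ^ 2 / (16 * l) := by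
    have : (0:ℝ) ≤ (x - L) ^ 2 / (16 * l) := by positivity
    linarith
  have hley : x + (x - L) ^ 2 / (16 * l) ≤ y := by
    have := lt_of_lt_of_le h3 (min_le_left _ _)
    rw [hy]; linarith
  have t1 : (P {ω | A n ω ≤ Real.sqrt (4 * l - L + x)}).toReal
      ≤ (P {ω | 4 * s * (A n ω - 2 * s + L / (4 * s)) ≤ x}).toReal := by
    rw [hset]
    exact ENNReal.toReal_mono (measure_ne_top P _) (mono _ _ hxle)
  have t2 : (P {ω | 4 * s * (A n ω - 2 * s + L / (4 * s)) ≤ x}).toReal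
      ≤ (P {ω | A n ω ≤ Real.sqrt (4 * l - L + y)}).toReal := by
    rw [hset]
    exact ENNReal.toReal_mono (measure_ne_top P _) (mono _ _ hley)
  rw [Real.dist_eq] at h1 h2 ⊢
  have b1 := (abs_lt.mp h1).1
  have b2 := (abs_lt.mp h2).2
  rw [abs_lt]
  constructor <;> [skip; skip] <;> linarith
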